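/- For z > 1, the quantity (-ζ(z))^{3/2} defined by (2/3)(-ζ(z))^{3/2} = √(z²-1) - arccos(1/z) satisfies, as z → 1⁺, the expansion (-ζ(z))^{3/2} = √2·(z-1)^{3/2} - (9√2/20)·(z-1)^{5/2} + O((z-1)^{7/2}). -/

import Mathlib

lemma zeta_key_ineq (s : ℝ) (h0 : 0 < s) (h1 : s ≤ 1/3) :
    |Real.sqrt (s+2) / (1+s) - Real.sqrt 2 * (1 - 3*s/4)| ≤ 2 * s^2 := by
  have hA2 : Real.sqrt (s+2) ^ 2 = s + 2 := Real.sq_sqrt (by linarith)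
  have hA0 : 0 ≤ Real.sqrt (s+2) := Real.sqrt_nonneg _
  have hB2 : Real.sqrt 2 ^ 2 = 2 := Real.sq_sqrt (by norm_num)
  have hB0 : 0 ≤ Real.sqrt 2 := Real.sqrt_nonneg _
  have hB1 : 1 ≤ Real.sqrt 2 := by nlinarith
  have hA1 : 1 ≤ Real.sqrt (s+2) := by nlinarith
  set A := Real.sqrt (s+2) with hA
  set B := Real.sqrt 2 with hB
  have hu : (1:ℝ) ≤ 1 + s/4 - 3*s^2/4 := by nlinarith
  have hBu : (B*(1 + s/4 - 3*s^2/4))^2 = 2*(1 + s/4 - 3*s^2/4)^2 := by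
    rw [mul_pow, hB2]
  have key0 : |A - B*(1 + s/4 - 3*s^2/4)| ≤ 2*s^2 := by
    rw [abs_le]
    constructor
    · have hsq : (B*(1 + s/4 - 3*s^2/4))^2 ≤ (A + 2*s^2)^2 := by
        rw [hBu]; nlinarith [mul_nonneg hA0 (sq_nonneg s), sq_nonneg s, sq_nonneg (s^2)]
      have h2 := (pow_le_pow_iff_left₀ (by positivity) (by positivity) two_ne_zero).mp hsq
      linarith
    · have hsq : A^2 ≤ (B*(1 + s/4 - 3*s^2/4) + 2*s^2)^2 := by
        nlinarith [mul_nonneg (mul_nonneg hB0 (by linarith : (0:ℝ) ≤ 1 + s/4 - 3*s^2/4)) (sq_nonneg s), sq_nonneg s, sq_nonneg (s^2)]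
      have h2 := (pow_le_pow_iff_left₀ hA0 (by positivity) two_ne_zero).mp hsq
      linarith
  have heq : A/(1+s) - B*(1 - 3*s/4) = (A - B*(1 + s/4 - 3*s^2/4))/(1+s) := by
    field_simp; ring
  rw [heq, abs_div, abs_of_pos (by linarith : (0:ℝ) < 1+s)]
  have hd : |A - B*(1 + s/4 - 3*s^2/4)| / (1+s) ≤ |A - B*(1 + s/4 - 3*s^2/4)| :=
    div_le_self (abs_nonneg _) (by linarith)
  linarith

noncomputable def zetaF (z : ℝ) : ℝ :=
  (3/2) * (Real.sqrt (z^2 - 1) - Real.arccos (1/z))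
    - Real.sqrt 2 * (Real.sqrt (z-1))^3 + (9 * Real.sqrt 2 / 20) * (Real.sqrt (z-1))^5

lemma zetaF_hasDeriv (z : ℝ) (hz1 : 1 < z) :
    HasDerivAt zetaF
      ((3/2) * Real.sqrt (z-1) * (Real.sqrt (z+1) / z - Real.sqrt 2 * (1 - 3*(z-1)/4))) z := by
  have hz0 : 0 < z := by linarith
  have hs0 : 0 < z - 1 := by linarith
  have ha0 : 0 < Real.sqrt (z-1) := Real.sqrt_pos.mpr hs0
  have hb0 : 0 < Real.sqrt (z+1) := Real.sqrt_pos.mpr (by linarith)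
  have ha2 : Real.sqrt (z-1) ^ 2 = z - 1 := Real.sq_sqrt hs0.le
  have hb2 : Real.sqrt (z+1) ^ 2 = z + 1 := Real.sq_sqrt (by linarith)
  have hsq : z^2 - 1 ≠ 0 := by nlinarith
  have hab : Real.sqrt (z^2 - 1) = Real.sqrt (z-1) * Real.sqrt (z+1) := by
    rw [show z^2 - 1 = (z-1)*(z+1) by ring, Real.sqrt_mul hs0.le]
  have hq : Real.sqrt (1 - (1/z)^2) = Real.sqrt (z-1) * Real.sqrt (z+1) / z := by
    rw [show 1 - (1/z)^2 = (z^2-1)/z^2 by field_simp, Real.sqrt_div (by nlinarith), hab,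
      Real.sqrt_sq hz0.le]
  set a := Real.sqrt (z-1) with haa
  set b := Real.sqrt (z+1) with hbb
  -- pieces
  have d1 : HasDerivAt (fun z : ℝ => z^2 - 1) (2*z) z := by
    simpa using (hasDerivAt_pow 2 z).sub_const 1
  have d1' : HasDerivAt (fun z : ℝ => Real.sqrt (z^2 - 1)) ((2*z)/(2*Real.sqrt (z^2-1))) z :=
    d1.sqrt hsq
  have dinv : HasDerivAt (fun z : ℝ => 1/z) (-(z^2)⁻¹) z := by
    simpa [one_div] using hasDerivAt_inv (ne_of_gt hz0)
  have h1z1 : 1/z < 1 := by rw [div_lt_one hz0]; linarith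
  have h1z0 : 0 < 1/z := by positivity
  have harc : HasDerivAt (fun z : ℝ => Real.arccos (1/z))
      (-(1/Real.sqrt (1 - (1/z)^2)) * -(z^2)⁻¹) z :=
    (Real.hasDerivAt_arccos (by linarith) (ne_of_lt h1z1)).comp z dinv
  have d3 : HasDerivAt (fun z : ℝ => Real.sqrt (z-1)) (1/(2*Real.sqrt (z-1))) z := by
    simpa using ((hasDerivAt_id z).sub_const 1).sqrt (ne_of_gt hs0)
  have d3c : HasDerivAt (fun z : ℝ => (Real.sqrt (z-1))^3)
      ((3:ℕ) * (Real.sqrt (z-1))^2 * (1/(2*Real.sqrt (z-1)))) z := d3.pow 3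
  have d5c : HasDerivAt (fun z : ℝ => (Real.sqrt (z-1))^5)
      ((5:ℕ) * (Real.sqrt (z-1))^4 * (1/(2*Real.sqrt (z-1)))) z := d3.pow 5
  have dF := (((d1'.sub harc).const_mul (3/2)).sub (d3c.const_mul (Real.sqrt 2))).add
      (d5c.const_mul (9 * Real.sqrt 2 / 20))
  refine dF.congr_deriv ?_
  symm
  rw [hab, hq]
  have e1 : 2*z/(2*(a*b)) = z/(a*b) := by ring
  have habsq : (a*b)^2 = z^2 - 1 := by rw [mul_pow, ha2, hb2]; ring
  have e2 : -(1/(a*b/z)) * -(z^2)⁻¹ = 1/(z*(a*b)) := by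
    field_simp
  have e3 : ((3:ℕ):ℝ)*a^2*(1/(2*a)) = 3/2*a := by
    field_simp; ring
  have e5 : ((5:ℕ):ℝ)*a^4*(1/(2*a)) = 5/2*a^3 := by
    field_simp; ring
  rw [e1, e2, e3, e5]
  have main : z/(a*b) - 1/(z*(a*b)) = a*b/z := by
    rw [div_sub_div _ _ (by positivity) (by positivity), div_eq_div_iff (by positivity) (by positivity)]
    linear_combination (-(z*a*b)) * habsq
  rw [main]
  linear_combination (-(9/8)) * Real.sqrt 2 * a * ha2

lemma rpow_half_nat (x : ℝ) (hx : 0 ≤ x) (n : ℕ) : x ^ ((n:ℝ)/2) = (Real.sqrt x)^n := by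
  rw [Real.sqrt_eq_rpow, ← Real.rpow_natCast (x ^ ((1:ℝ)/2)) n, ← Real.rpow_mul hx]
  congr 1
  ring

lemma zetaF_one : zetaF 1 = 0 := by
  norm_num [zetaF, Real.arccos_one, Real.sqrt_zero]

lemma zetaF_contOn : ContinuousOn zetaF (Set.Icc 1 (4/3) : Set ℝ) := by
  have c1 : Continuous fun y : ℝ => Real.sqrt (y^2 - 1) :=
    Real.continuous_sqrt.comp (by continuity)
  have c3 : Continuous fun y : ℝ => Real.sqrt (y - 1) :=
    Real.continuous_sqrt.comp (by continuity)
  have c2 : ContinuousOn (fun y : ℝ => Real.arccos (1/y)) (Set.Icc 1 (4/3) : Set ℝ) := by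
    apply Real.continuous_arccos.comp_continuousOn
    apply ContinuousOn.div continuousOn_const continuousOn_id
    intro y hy
    exact ne_of_gt (lt_of_lt_of_le one_pos hy.1)
  have hF : zetaF = fun y => (3/2) * (Real.sqrt (y^2 - 1) - Real.arccos (1/y))
      - Real.sqrt 2 * (Real.sqrt (y-1))^3 + (9 * Real.sqrt 2 / 20) * (Real.sqrt (y-1))^5 := rfl
  rw [hF]
  exact ((continuousOn_const.mul (c1.continuousOn.sub c2)).sub
    (continuousOn_const.mul ((c3.pow 3).continuousOn))).add
    (continuousOn_const.mul ((c3.pow 5).continuousOn))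

lemma zetaF_aux (ε : ℝ) (hε : ε = 1 ∨ ε = -1) (z : ℝ) (hz1 : 1 ≤ z) (hz2 : z ≤ 4/3) :
    0 ≤ (Real.sqrt (z-1))^7 + ε * zetaF z := by
  set G : ℝ → ℝ := fun x => (Real.sqrt (x-1))^7 + ε * zetaF x with hG
  have c3 : Continuous fun y : ℝ => Real.sqrt (y - 1) :=
    Real.continuous_sqrt.comp (by continuity)
  have hDG : ∀ x ∈ Set.Ioo (1:ℝ) (4/3), HasDerivAt G
      ((7:ℕ) * (Real.sqrt (x-1))^6 * (1/(2*Real.sqrt (x-1)))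
        + ε * ((3/2) * Real.sqrt (x-1) * (Real.sqrt (x+1) / x - Real.sqrt 2 * (1 - 3*(x-1)/4)))) x := by
    intro x hx
    have hs0 : (0:ℝ) < x - 1 := by linarith [hx.1]
    have hd3 : HasDerivAt (fun y : ℝ => Real.sqrt (y-1)) (1/(2*Real.sqrt (x-1))) x := by
      simpa using ((hasDerivAt_id x).sub_const 1).sqrt (ne_of_gt hs0)
    exact (hd3.pow 7).add ((zetaF_hasDeriv x hx.1).const_mul ε)
  have hderiv_nonneg : ∀ x ∈ Set.Ioo (1:ℝ) (4/3), 0 ≤ deriv G x := by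
    intro x hx
    rw [(hDG x hx).deriv]
    have hs0 : (0:ℝ) < x - 1 := by linarith [hx.1]
    have ha0 : 0 < Real.sqrt (x-1) := Real.sqrt_pos.mpr hs0
    have ha2 : Real.sqrt (x-1) ^ 2 = x - 1 := Real.sq_sqrt hs0.le
    set a := Real.sqrt (x-1) with haa
    have hkey := zeta_key_ineq (x-1) hs0 (by linarith [hx.2])
    rw [show x - 1 + 2 = x + 1 by ring, show 1 + (x-1) = x by ring] at hkey
    obtain ⟨hlow, hup⟩ := abs_le.mp hkey
    have h7 : ((7:ℕ):ℝ) * a^6 * (1/(2*a)) = 7/2 * ((x-1)^2 * a) := by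
      rw [show a^6 = (a^2)^2 * a^2 by ring, ha2]
      field_simp
      linear_combination (-7) * ha2
    rw [h7]
    have hmul_low := mul_le_mul_of_nonneg_left hlow ha0.le
    have hmul_up := mul_le_mul_of_nonneg_left hup ha0.le
    have hanneg : 0 ≤ a * (x-1)^2 := by positivity
    rcases hε with h | h <;> subst h <;> nlinarith [hmul_low, hmul_up, hanneg]
  have hmono : MonotoneOn G (Set.Icc 1 (4/3)) := by
    apply monotoneOn_of_deriv_nonneg (convex_Icc _ _)
    · exact ((c3.pow 7).continuousOn).add (continuousOn_const.mul zetaF_contOn)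
    · rw [interior_Icc]
      intro x hx
      exact ((hDG x hx).differentiableAt).differentiableWithinAt
    · rw [interior_Icc]
      exact hderiv_nonneg
  have h1 : G 1 ≤ G z := hmono ⟨le_refl 1, by norm_num⟩ ⟨hz1, hz2⟩ hz1
  have hG1 : G 1 = 0 := by
    simp [hG, zetaF_one]
  have hGz : G z = (Real.sqrt (z-1))^7 + ε * zetaF z := rfl
  linarith [h1, hG1.symm.le]

lemma zetaF_bound (z : ℝ) (hz1 : 1 ≤ z) (hz2 : z ≤ 4/3) :
    |zetaF z| ≤ (Real.sqrt (z-1))^7 := by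
  have h1 := zetaF_aux 1 (Or.inl rfl) z hz1 hz2
  have h2 := zetaF_aux (-1) (Or.inr rfl) z hz1 hz2
  rw [abs_le]
  constructor <;> nlinarith [h1, h2]

theorem zeta_expansion_above (ζ : ℝ → ℝ)
    (hneg : ∀ z : ℝ, 1 < z → 0 < -ζ z)
    (hdef : ∀ z : ℝ, 1 < z →
      (2/3) * (-ζ z) ^ ((3:ℝ)/2) = Real.sqrt (z^2 - 1) - Real.arccos (1/z)) :
    ∃ C > 0, ∃ δ > 0, ∀ z, 1 < z → z < 1 + δ →
      |(-ζ z) ^ ((3:ℝ)/2) - Real.sqrt 2 * (z - 1) ^ ((3:ℝ)/2)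
        + (9 * Real.sqrt 2 / 20) * (z - 1) ^ ((5:ℝ)/2)| ≤ C * (z - 1) ^ ((7:ℝ)/2) := by
  refine ⟨1, one_pos, 1/3, by norm_num, fun z hz1 hz2 => ?_⟩
  have hs0 : (0:ℝ) ≤ z - 1 := by linarith
  have hX : (-ζ z) ^ ((3:ℝ)/2) = (3/2) * (Real.sqrt (z^2 - 1) - Real.arccos (1/z)) := by
    have := hdef z hz1
    linarith
  have r3 : (z-1) ^ ((3:ℝ)/2) = (Real.sqrt (z-1))^(3:ℕ) := by
    rw [show ((3:ℝ)/2) = ((3:ℕ):ℝ)/2 by norm_num]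
    exact rpow_half_nat _ hs0 3
  have r5 : (z-1) ^ ((5:ℝ)/2) = (Real.sqrt (z-1))^(5:ℕ) := by
    rw [show ((5:ℝ)/2) = ((5:ℕ):ℝ)/2 by norm_num]
    exact rpow_half_nat _ hs0 5
  have r7 : (z-1) ^ ((7:ℝ)/2) = (Real.sqrt (z-1))^(7:ℕ) := by
    rw [show ((7:ℝ)/2) = ((7:ℕ):ℝ)/2 by norm_num]
    exact rpow_half_nat _ hs0 7
  rw [hX, r3, r5, r7, one_mul]
  have hb := zetaF_bound z hz1.le (by linarith)
  have heq : (3/2) * (Real.sqrt (z^2 - 1) - Real.arccos (1/z))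
      - Real.sqrt 2 * (Real.sqrt (z-1))^3 + (9 * Real.sqrt 2 / 20) * (Real.sqrt (z-1))^5
      = zetaF z := rfl
  rw [heq]
  exact hb
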